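/- Let c > 0 be a real number, let N ≥ 2 be an integer, and let (u_μ) and (v_μ) be complex numbers satisfying |u_μ| ≤ c^μ/√(μ+1) and |v_μ| ≤ c^μ/√(μ+1) for all integers μ with 1 ≤ μ ≤ N−1. Then Σ_{μ=1}^{N−1} |u_{N−μ}| · |v_μ| ≤ π c^N. -/

import Mathlib

open Real Finset

lemma g_deriv (a : ℝ) (ha : 0 < a) (x : ℝ) (hx : 0 < x) (hxa : x < a) :
    HasDerivAt (fun y => 2 * Real.arcsin (Real.sqrt (y / a)))
      ((Real.sqrt (x * (a - x)))⁻¹) x := by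
  have hxa0 : 0 < x / a := div_pos hx ha
  have hxa1 : x / a < 1 := (div_lt_one ha).2 hxa
  have hs0 : 0 < Real.sqrt (x / a) := Real.sqrt_pos.2 hxa0
  have hs1 : Real.sqrt (x / a) < 1 := by
    rw [show (1:ℝ) = Real.sqrt 1 by simp]
    exact Real.sqrt_lt_sqrt hxa0.le hxa1
  have hd1 : HasDerivAt (fun y : ℝ => y / a) (1 / a) x := by
    simpa using (hasDerivAt_id x).div_const a
  have hd2 : HasDerivAt (fun y : ℝ => Real.sqrt (y / a))
      (1 / (2 * Real.sqrt (x / a)) * (1 / a)) x :=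
    (Real.hasDerivAt_sqrt hxa0.ne').comp x hd1
  have hd3 : HasDerivAt (fun y : ℝ => Real.arcsin (Real.sqrt (y / a)))
      (1 / Real.sqrt (1 - Real.sqrt (x / a) ^ 2) * (1 / (2 * Real.sqrt (x / a)) * (1 / a))) x :=
    by have := (Real.hasDerivAt_arcsin (x := Real.sqrt (x / a)) (by linarith) hs1.ne).comp x hd2; exact this
  have := hd3.const_mul (2 : ℝ)
  refine this.congr_deriv (Eq.symm ?_)
  have hsq : Real.sqrt (x / a) ^ 2 = x / a := Real.sq_sqrt hxa0.le
  rw [hsq]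
  have h1 : (1 : ℝ) - x / a = (a - x) / a := by field_simp
  rw [h1]
  have hax : (0:ℝ) < a - x := by linarith
  have hsx : 0 < Real.sqrt x := Real.sqrt_pos.2 hx
  have hsax : 0 < Real.sqrt (a - x) := Real.sqrt_pos.2 hax
  have hsa : 0 < Real.sqrt a := Real.sqrt_pos.2 ha
  have hsa2 : Real.sqrt a ^ 2 = a := Real.sq_sqrt ha.le
  rw [Real.sqrt_mul hx.le, Real.sqrt_div hax.le, Real.sqrt_div hx.le]
  field_simp
  nlinarith [hsa2, hsx, hsax, hsa]

lemma g_step (a : ℝ) (ha : 0 < a) (s t : ℝ) (h0 : 0 ≤ s) (hst : s < t) (ht : t ≤ a / 2) :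
    (t - s) * (Real.sqrt (t * (a - t)))⁻¹ ≤
      2 * Real.arcsin (Real.sqrt (t / a)) - 2 * Real.arcsin (Real.sqrt (s / a)) := by
  set g : ℝ → ℝ := fun y => 2 * Real.arcsin (Real.sqrt (y / a)) with hg
  have hcont : ContinuousOn g (Set.Icc s t) :=
    (continuous_const.mul (Real.continuous_arcsin.comp (Real.continuous_sqrt.comp
      (continuous_id.div_const a)))).continuousOn
  obtain ⟨ξ, hξ, hslope⟩ := exists_hasDerivAt_eq_slope g
    (fun x => (Real.sqrt (x * (a - x)))⁻¹) hst hcont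
    (fun x hx => g_deriv a ha x (lt_of_le_of_lt h0 hx.1) (by
      have := hx.2; linarith))
  have hξ1 : 0 < ξ := lt_of_le_of_lt h0 hξ.1
  have hξ2 : ξ < t := hξ.2
  have hmono : Real.sqrt (ξ * (a - ξ)) ≤ Real.sqrt (t * (a - t)) := by
    apply Real.sqrt_le_sqrt; nlinarith
  have hpos : 0 < Real.sqrt (ξ * (a - ξ)) := Real.sqrt_pos.2 (by nlinarith)
  have hinv : (Real.sqrt (t * (a - t)))⁻¹ ≤ (Real.sqrt (ξ * (a - ξ)))⁻¹ :=
    inv_anti₀ hpos hmono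
  have hne : t - s ≠ 0 := by linarith
  have heq : g t - g s = (t - s) * (Real.sqrt (ξ * (a - ξ)))⁻¹ := by
    rw [hslope, mul_div_cancel₀ _ hne]
  rw [heq]
  have : 0 ≤ t - s := by linarith
  exact mul_le_mul_of_nonneg_left hinv this

lemma half_sum (n m : ℕ) (hm : 2 * m ≤ n + 1) :
    ∑ k ∈ Finset.Icc 1 m, (Real.sqrt ((k : ℝ) * ((n : ℝ) + 1 - (k : ℝ))))⁻¹ ≤ Real.pi / 2 := by
  set a : ℝ := (n : ℝ) + 1 with ha
  have ha0 : 0 < a := by positivity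
  set G : ℕ → ℝ := fun k => 2 * Real.arcsin (Real.sqrt ((k : ℝ) / a)) with hG
  have hstep : ∀ k ∈ Finset.Icc 1 m,
      (Real.sqrt ((k : ℝ) * (a - (k : ℝ))))⁻¹ ≤ G k - G (k - 1) := by
    intro k hk
    simp only [Finset.mem_Icc] at hk
    have hk1 : 1 ≤ k := hk.1
    have hcast : ((k - 1 : ℕ) : ℝ) = (k : ℝ) - 1 := by
      have : (1:ℕ) ≤ k := hk1
      push_cast [this]; ring
    have hka : (k : ℝ) ≤ a / 2 := by
      have hkn : 2 * k ≤ n + 1 := le_trans (Nat.mul_le_mul_left 2 hk.2) hm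
      have : ((2 * k : ℕ) : ℝ) ≤ ((n + 1 : ℕ) : ℝ) := Nat.cast_le.mpr hkn
      push_cast at this
      linarith
    have := g_step a ha0 ((k : ℝ) - 1) (k : ℝ) (by
        have : (1:ℝ) ≤ (k:ℝ) := by exact_mod_cast hk1
        linarith) (by linarith) hka
    simp only [hG, hcast]
    calc (Real.sqrt ((k : ℝ) * (a - (k : ℝ))))⁻¹
        = ((k : ℝ) - ((k : ℝ) - 1)) * (Real.sqrt ((k : ℝ) * (a - (k : ℝ))))⁻¹ := by ring
      _ ≤ _ := this
  have htel : ∑ k ∈ Finset.Icc 1 m, (G k - G (k - 1)) = G m - G 0 := by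
    induction m with
    | zero => simp
    | succ p ih =>
      rw [Finset.sum_Icc_succ_top (by omega),
        ih (by omega) (fun k hk => hstep k (by simp only [Finset.mem_Icc] at hk ⊢; omega))]
      simp only [Nat.add_sub_cancel]
      ring
  have hG0 : G 0 = 0 := by simp [hG]
  have hGm : G m ≤ Real.pi / 2 := by
    have h1 : Real.sqrt ((m : ℝ) / a) ≤ Real.sqrt 2 / 2 := by
      have hma : (m : ℝ) / a ≤ 1 / 2 := by
        rw [div_le_div_iff₀ ha0 (by norm_num)]
        have : (2 * m : ℝ) ≤ (n : ℝ) + 1 := by exact_mod_cast hm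
        linarith
      calc Real.sqrt ((m : ℝ) / a) ≤ Real.sqrt (1 / 2) := Real.sqrt_le_sqrt hma
        _ = Real.sqrt 2 / 2 := by
            rw [show (1:ℝ)/2 = 2 / 2 ^ 2 by norm_num, Real.sqrt_div (by norm_num),
              Real.sqrt_sq (by norm_num)]
    have h2 : Real.arcsin (Real.sqrt ((m : ℝ) / a)) ≤ Real.pi / 4 := by
      calc Real.arcsin (Real.sqrt ((m : ℝ) / a)) ≤ Real.arcsin (Real.sqrt 2 / 2) :=
            Real.monotone_arcsin h1
        _ = Real.pi / 4 := by
            rw [← Real.sin_pi_div_four]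
            exact Real.arcsin_sin (by linarith [Real.pi_pos]) (by linarith [Real.pi_pos])
    simp only [hG]; linarith
  calc ∑ k ∈ Finset.Icc 1 m, (Real.sqrt ((k : ℝ) * ((n : ℝ) + 1 - (k : ℝ))))⁻¹
      ≤ ∑ k ∈ Finset.Icc 1 m, (G k - G (k - 1)) := Finset.sum_le_sum hstep
    _ = G m - G 0 := htel
    _ ≤ Real.pi / 2 := by rw [hG0]; linarith

lemma key_sum (n : ℕ) :
    ∑ k ∈ Finset.Icc 1 n, (Real.sqrt ((k : ℝ) * ((n : ℝ) + 1 - (k : ℝ))))⁻¹ ≤ Real.pi := by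
  rcases Nat.eq_zero_or_pos n with h0 | h0
  · subst h0; simp [Real.pi_pos.le]
  set m := (n + 1) / 2 with hm
  have hm1 : 1 ≤ m := by omega
  have hmn : m ≤ n := by omega
  have hsplit : Finset.Icc 1 n = Finset.Icc 1 m ∪ Finset.Ioc m n := by
    ext x
    simp only [Finset.mem_Icc, Finset.mem_Ioc, Finset.mem_union]
    omega
  have hdisj : Disjoint (Finset.Icc 1 m) (Finset.Ioc m n) := by
    rw [Finset.disjoint_left]
    intro x hx hx'
    simp only [Finset.mem_Icc, Finset.mem_Ioc] at hx hx'
    omega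
  rw [hsplit, Finset.sum_union hdisj]
  have h1 : ∑ k ∈ Finset.Icc 1 m, (Real.sqrt ((k : ℝ) * ((n : ℝ) + 1 - (k : ℝ))))⁻¹
      ≤ Real.pi / 2 := half_sum n m (by omega)
  have h2 : ∑ k ∈ Finset.Ioc m n, (Real.sqrt ((k : ℝ) * ((n : ℝ) + 1 - (k : ℝ))))⁻¹
      = ∑ j ∈ Finset.Icc 1 (n - m), (Real.sqrt ((j : ℝ) * ((n : ℝ) + 1 - (j : ℝ))))⁻¹ := by
    apply Finset.sum_nbij' (fun k => n + 1 - k) (fun j => n + 1 - j)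
    · intro k hk
      simp only [Finset.mem_Icc, Finset.mem_Ioc] at hk ⊢
      omega
    · intro j hj
      simp only [Finset.mem_Icc, Finset.mem_Ioc] at hj ⊢
      omega
    · intro k hk
      simp only [Finset.mem_Ioc] at hk
      omega
    · intro j hj
      simp only [Finset.mem_Icc] at hj
      omega
    · intro k hk
      simp only [Finset.mem_Ioc] at hk
      have hc : ((n + 1 - k : ℕ) : ℝ) = (n : ℝ) + 1 - (k : ℝ) := by
        have : k ≤ n + 1 := by omega
        push_cast [this]; ring
      rw [hc]
      congr 1
      ring
  rw [h2]
  have h3 : ∑ j ∈ Finset.Icc 1 (n - m), (Real.sqrt ((j : ℝ) * ((n : ℝ) + 1 - (j : ℝ))))⁻¹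
      ≤ Real.pi / 2 := half_sum n (n - m) (by omega)
  linarith

/-- Convolution estimate underlying (2.24)–(2.25) of the paper: if
`|u_μ| ≤ c^μ/√(μ+1)` and `|v_μ| ≤ c^μ/√(μ+1)` for `1 ≤ μ ≤ N−1`, then
`∑_{μ=1}^{N−1} |u_{N−μ}|·|v_μ| ≤ π c^N`. -/
theorem convolution_estimate (c : ℝ) (hc : 0 < c) (N : ℕ) (hN : 2 ≤ N) (u v : ℕ → ℂ)
    (hu : ∀ μ : ℕ, 1 ≤ μ → μ ≤ N - 1 → ‖u μ‖ ≤ c ^ μ / Real.sqrt ((μ : ℝ) + 1))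
    (hv : ∀ μ : ℕ, 1 ≤ μ → μ ≤ N - 1 → ‖v μ‖ ≤ c ^ μ / Real.sqrt ((μ : ℝ) + 1)) :
    ∑ μ ∈ Finset.Icc 1 (N - 1), ‖u (N - μ)‖ * ‖v μ‖ ≤ Real.pi * c ^ N := by
  have hterm : ∀ μ ∈ Finset.Icc 1 (N - 1),
      ‖u (N - μ)‖ * ‖v μ‖ ≤ c ^ N * (Real.sqrt ((μ : ℝ) * ((N : ℝ) + 1 - (μ : ℝ))))⁻¹ := by
    intro μ hμ
    simp only [Finset.mem_Icc] at hμ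
    obtain ⟨hμ1, hμ2⟩ := hμ
    have hμN : μ ≤ N := by omega
    have hu' := hu (N - μ) (by omega) (by omega)
    have hv' := hv μ hμ1 hμ2
    have hcast : ((N - μ : ℕ) : ℝ) = (N : ℝ) - (μ : ℝ) := by push_cast [hμN]; ring
    have hd1 : (0:ℝ) < Real.sqrt (((N - μ : ℕ) : ℝ) + 1) := by
      apply Real.sqrt_pos.2; rw [hcast]
      have : (μ:ℝ) ≤ (N:ℝ) := by exact_mod_cast hμN
      linarith
    have hd2 : (0:ℝ) < Real.sqrt ((μ : ℝ) + 1) := by positivity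
    have hb1 : (0:ℝ) ≤ c ^ (N - μ) / Real.sqrt (((N - μ : ℕ) : ℝ) + 1) := by positivity
    calc ‖u (N - μ)‖ * ‖v μ‖
        ≤ (c ^ (N - μ) / Real.sqrt (((N - μ : ℕ) : ℝ) + 1)) *
          (c ^ μ / Real.sqrt ((μ : ℝ) + 1)) :=
          mul_le_mul hu' hv' (norm_nonneg _) hb1
      _ = c ^ N / (Real.sqrt (((N : ℝ) - (μ : ℝ)) + 1) * Real.sqrt ((μ : ℝ) + 1)) := by
          rw [hcast, div_mul_div_comm, ← pow_add]
          congr 2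
          omega
      _ = c ^ N * (Real.sqrt ((((N : ℝ) - (μ : ℝ)) + 1) * ((μ : ℝ) + 1)))⁻¹ := by
          rw [← Real.sqrt_mul (by
            have : (μ:ℝ) ≤ (N:ℝ) := by exact_mod_cast hμN
            linarith)]
          rw [div_eq_mul_inv]
      _ ≤ c ^ N * (Real.sqrt ((μ : ℝ) * ((N : ℝ) + 1 - (μ : ℝ))))⁻¹ := by
          apply mul_le_mul_of_nonneg_left _ (by positivity)
          apply inv_anti₀
          · apply Real.sqrt_pos.2
            have h1 : (1:ℝ) ≤ (μ:ℝ) := by exact_mod_cast hμ1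
            have h2 : (μ:ℝ) ≤ (N:ℝ) - 1 := by
              have : ((μ:ℕ):ℝ) ≤ ((N-1:ℕ):ℝ) := by exact_mod_cast hμ2
              rw [show ((N-1:ℕ):ℝ) = (N:ℝ) - 1 by push_cast [show 1 ≤ N by omega]; ring] at this
              exact this
            nlinarith
          · apply Real.sqrt_le_sqrt
            have h1 : (1:ℝ) ≤ (μ:ℝ) := by exact_mod_cast hμ1
            have h2 : (μ:ℝ) ≤ (N:ℝ) - 1 := by
              have : ((μ:ℕ):ℝ) ≤ ((N-1:ℕ):ℝ) := by exact_mod_cast hμ2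
              rw [show ((N-1:ℕ):ℝ) = (N:ℝ) - 1 by push_cast [show 1 ≤ N by omega]; ring] at this
              exact this
            nlinarith
  calc ∑ μ ∈ Finset.Icc 1 (N - 1), ‖u (N - μ)‖ * ‖v μ‖
      ≤ ∑ μ ∈ Finset.Icc 1 (N - 1), c ^ N * (Real.sqrt ((μ : ℝ) * ((N : ℝ) + 1 - (μ : ℝ))))⁻¹ :=
        Finset.sum_le_sum hterm
    _ = c ^ N * ∑ μ ∈ Finset.Icc 1 (N - 1), (Real.sqrt ((μ : ℝ) * ((N : ℝ) + 1 - (μ : ℝ))))⁻¹ :=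
        (Finset.mul_sum _ _ _).symm
    _ ≤ c ^ N * ∑ μ ∈ Finset.Icc 1 N, (Real.sqrt ((μ : ℝ) * ((N : ℝ) + 1 - (μ : ℝ))))⁻¹ := by
        apply mul_le_mul_of_nonneg_left _ (by positivity)
        apply Finset.sum_le_sum_of_subset_of_nonneg
        · apply Finset.Icc_subset_Icc_right; omega
        · intro i _ _; positivity
    _ ≤ c ^ N * Real.pi := mul_le_mul_of_nonneg_left (key_sum N) (by positivity)
    _ = Real.pi * c ^ N := mul_comm _ _
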